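/- A channel of width W cannot support a frozen front unless the stream-function difference across it is at least v₀W: let v₀ > 0, W > 0, let Ψ : ℝ² → ℝ be continuously differentiable, let u = (∂Ψ/∂y, −∂Ψ/∂x), and let (r, θ) : [t₀, t₁] → ℝ² × ℝ be a differentiable solution of ṙ = u(r) + v₀ n̂(θ) that is sliding (ṙ · n̂(θ) = 0) with ṙ(t) · ĝ(θ(t)) > 0 for all t, and whose endpoints lie on the two channel walls: r(t₀) has y-coordinate 0 and r(t₁) has y-coordinate W. Then Ψ(r(t₀)) − Ψ(r(t₁)) ≥ v₀ W. -/

import Mathlib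

noncomputable section

open Real Polynomial

/-- Points in the plane, with the Euclidean norm. -/
abbrev Pt : Type := EuclideanSpace ℝ (Fin 2)

/-- Build a point of the plane from two coordinates. -/
def vec2 (a b : ℝ) : Pt := (WithLp.equiv 2 (Fin 2 → ℝ)).symm ![a, b]

/-- Front tangent direction ĝ(θ) = (cos θ, sin θ). -/
def ghat (θ : ℝ) : Pt := vec2 (Real.cos θ) (Real.sin θ)

/-- Front normal (burning) direction n̂(θ) = (sin θ, −cos θ). -/
def nhat (θ : ℝ) : Pt := vec2 (Real.sin θ) (-(Real.cos θ))

/-- Euclidean dot product on the plane. -/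
def dot (v w : Pt) : ℝ := v 0 * w 0 + v 1 * w 1

/-- The Jacobian matrix Du(r) of a planar vector field. -/
def jacOf (u : Pt → Pt) (r : Pt) : Matrix (Fin 2) (Fin 2) ℝ :=
  fun i j => fderiv ℝ u r (EuclideanSpace.single j 1) i

/-- Action of a 2×2 matrix on a point of the plane. -/
def mulVec2 (M : Matrix (Fin 2) (Fin 2) ℝ) (v : Pt) : Pt :=
  vec2 (M 0 0 * v 0 + M 0 1 * v 1) (M 1 0 * v 0 + M 1 1 * v 1)

/-- The three-dimensional front-element vector field
    F(r, θ) = (u(r) + v₀ n̂(θ), −n̂(θ)·(Du(r) ĝ(θ))). -/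
def frontField (v₀ : ℝ) (u : Pt → Pt) (q : Pt × ℝ) : Pt × ℝ :=
  (u q.1 + v₀ • nhat q.2, -(dot (nhat q.2) (mulVec2 (jacOf u q.1) (ghat q.2))))

/-- The standard basis of ℝ² × ℝ ≃ ℝ³. -/
def basis3 : Fin 3 → Pt × ℝ :=
  ![(EuclideanSpace.single 0 1, 0), (EuclideanSpace.single 1 1, 0), ((0 : Pt), 1)]

/-- Components of a vector in ℝ² × ℝ ≃ ℝ³. -/
def comp3 (p : Pt × ℝ) : Fin 3 → ℝ := ![p.1 0, p.1 1, p.2]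

/-- The 3×3 Jacobian matrix of the front-element field at a point of ℝ² × ℝ. -/
def jac3 (v₀ : ℝ) (u : Pt → Pt) (q : Pt × ℝ) : Matrix (Fin 3) (Fin 3) ℝ :=
  fun i j => comp3 (fderiv ℝ (frontField v₀ u) q (basis3 j)) i

/-- Second partial derivative ∂ⱼ∂ₖuᵢ(r). -/
def d2 (u : Pt → Pt) (r : Pt) (i j k : Fin 2) : ℝ :=
  fderiv ℝ (fun x => fderiv ℝ u x (EuclideanSpace.single k 1) i) r (EuclideanSpace.single j 1)

/-- Divergence-free: ∂₁u₁ + ∂₂u₂ = 0 everywhere. -/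
def divFree (u : Pt → Pt) : Prop := ∀ r : Pt, jacOf u r 0 0 + jacOf u r 1 1 = 0

/-- Rotation of a planar vector by +π/2. -/
def perp (v : Pt) : Pt := vec2 (-(v 1)) (v 0)

/-- The velocity field generated by a stream function: u = (∂Ψ/∂y, −∂Ψ/∂x). -/
def uOf (Ψ : Pt → ℝ) (x : Pt) : Pt :=
  vec2 (fderiv ℝ Ψ x (EuclideanSpace.single 1 1)) (-(fderiv ℝ Ψ x (EuclideanSpace.single 0 1)))

/-- Polar angle of a point of the plane. -/
def angOf (x : Pt) : ℝ := Complex.arg ⟨x 0, x 1⟩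


lemma pt_add_apply (x y : Pt) (i : Fin 2) : (x + y) i = x i + y i := rfl
lemma pt_smul_apply (c : ℝ) (x : Pt) (i : Fin 2) : (c • x) i = c * x i := rfl
lemma vec2_zero (a b : ℝ) : vec2 a b 0 = a := rfl
lemma vec2_one (a b : ℝ) : vec2 a b 1 = b := rfl

lemma clm_apply2 (L : Pt →L[ℝ] ℝ) (v : Pt) :
    L v = v 0 * L (EuclideanSpace.single 0 1) + v 1 * L (EuclideanSpace.single 1 1) := by
  have hv : v = v 0 • EuclideanSpace.single (0:Fin 2) (1:ℝ) + v 1 • EuclideanSpace.single 1 1 := by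
    ext i; fin_cases i <;> simp [EuclideanSpace.single_apply]
  conv_lhs => rw [hv]
  simp [smul_eq_mul]

/-- A channel of width W cannot support a frozen front unless the
stream-function difference across it is at least v₀W: a cusp-free sliding front
joining the walls y = 0 and y = W satisfies Ψ(r(t₀)) − Ψ(r(t₁)) ≥ v₀ W. -/
theorem channel_stream_function_drop
    (v₀ W : ℝ) (hv₀ : 0 < v₀) (hW : 0 < W)
    (Ψ : Pt → ℝ) (hΨ : ContDiff ℝ 1 Ψ)
    (t₀ t₁ : ℝ) (ht : t₀ ≤ t₁) (r : ℝ → Pt) (θ : ℝ → ℝ)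
    (hr : ∀ t ∈ Set.Icc t₀ t₁, HasDerivAt r (uOf Ψ (r t) + v₀ • nhat (θ t)) t)
    (hslide : ∀ t ∈ Set.Icc t₀ t₁,
      dot (uOf Ψ (r t) + v₀ • nhat (θ t)) (nhat (θ t)) = 0)
    (hpos : ∀ t ∈ Set.Icc t₀ t₁,
      0 < dot (uOf Ψ (r t) + v₀ • nhat (θ t)) (ghat (θ t)))
    (hstart : r t₀ 1 = 0) (hend : r t₁ 1 = W) :
    v₀ * W ≤ Ψ (r t₀) - Ψ (r t₁) := by
  set f : ℝ → ℝ := fun t => Ψ (r t) + v₀ * r t 1 with hf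
  -- derivative of f on Icc
  have hfd : ∀ t ∈ Set.Icc t₀ t₁,
      HasDerivAt f
        (fderiv ℝ Ψ (r t) (uOf Ψ (r t) + v₀ • nhat (θ t))
          + v₀ * ((uOf Ψ (r t) + v₀ • nhat (θ t)) 1)) t := by
    intro t htm
    have h1 : HasDerivAt (fun s => Ψ (r s))
        (fderiv ℝ Ψ (r t) (uOf Ψ (r t) + v₀ • nhat (θ t))) t :=
      (hΨ.differentiable one_ne_zero (r t)).hasFDerivAt.comp_hasDerivAt t (hr t htm)
    have h2 : HasDerivAt (fun s => r s 1) ((uOf Ψ (r t) + v₀ • nhat (θ t)) 1) t :=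
      (EuclideanSpace.proj (1:Fin 2) : Pt →L[ℝ] ℝ).hasFDerivAt.comp_hasDerivAt t (hr t htm)
    exact h1.add (h2.const_mul v₀)
  -- the derivative is nonpositive
  have hneg : ∀ t ∈ Set.Icc t₀ t₁,
      fderiv ℝ Ψ (r t) (uOf Ψ (r t) + v₀ • nhat (θ t))
        + v₀ * ((uOf Ψ (r t) + v₀ • nhat (θ t)) 1) ≤ 0 := by
    intro t htm
    set a : ℝ := fderiv ℝ Ψ (r t) (EuclideanSpace.single 0 1) with ha
    set b : ℝ := fderiv ℝ Ψ (r t) (EuclideanSpace.single 1 1) with hb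
    set s : ℝ := Real.sin (θ t) with hs
    set c : ℝ := Real.cos (θ t) with hc
    have hpyth : s ^ 2 + c ^ 2 = 1 := Real.sin_sq_add_cos_sq (θ t)
    have hv0 : (uOf Ψ (r t) + v₀ • nhat (θ t)) 0 = b + v₀ * s := by
      simp only [pt_add_apply, pt_smul_apply, uOf, nhat, vec2_zero, ← hb, ← hs]
    have hv1 : (uOf Ψ (r t) + v₀ • nhat (θ t)) 1 = -a + v₀ * (-c) := by
      simp only [pt_add_apply, pt_smul_apply, uOf, nhat, vec2_one, ← ha, ← hc]
    have hsl := hslide t htm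
    have hps := hpos t htm
    simp only [dot] at hsl hps
    rw [hv0, hv1] at hsl hps
    simp only [nhat, ghat, vec2_zero, vec2_one, ← hs, ← hc] at hsl hps
    rw [clm_apply2, hv0, hv1, ← ha, ← hb]
    -- hsl : (b + v₀*s)*s + (-a + v₀*(-c))*(-c) = 0
    have hQ : a * c + b * s + v₀ = 0 := by nlinarith [hpyth, hsl]
    have hg : 0 < b * c - a * s := by nlinarith [hps]
    have h1 : -a + v₀ * (-c) = s * (b * c - a * s) := by
      linear_combination (-c) * hQ + a * hpyth
    have hsle : s ≤ 1 := Real.sin_le_one (θ t)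
    nlinarith [mul_nonneg (mul_pos hv₀ hg).le (sub_nonneg.2 hsle), hQ, h1]
  -- f is antitone on the interval
  have hanti : AntitoneOn f (Set.Icc t₀ t₁) := by
    apply antitoneOn_of_deriv_nonpos (convex_Icc t₀ t₁)
    · exact fun t htm => ((hfd t htm).continuousAt).continuousWithinAt
    · intro t htm
      rw [interior_Icc] at htm
      exact ((hfd t (Set.mem_Icc_of_Ioo htm)).differentiableAt).differentiableWithinAt
    · intro t htm
      rw [interior_Icc] at htm
      rw [(hfd t (Set.mem_Icc_of_Ioo htm)).deriv]
      exact hneg t (Set.mem_Icc_of_Ioo htm)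
  have := hanti (Set.left_mem_Icc.2 ht) (Set.right_mem_Icc.2 ht) ht
  simp only [hf, hstart, hend] at this
  linarith
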